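/- Let C₋, C₊ be isotropic elasticity tensors on Sym₃ with Lamé parameters (λ₋, μ₋) and (λ₊, μ₊), μ∓ > 0 and 3λ∓ + 2μ∓ > 0, and ν∓ = λ∓/(2(λ∓+μ∓)). Suppose ⟦C⟧ = C₊ − C₋ is negative definite on Sym₃ (equivalently μ₊ < μ₋ and 3λ₊ + 2μ₊ < 3λ₋ + 2μ₋). Then for every unit vector n ∈ ℝ³: (i) the operator ⟦C⟧⁻¹ + K₋(n) on Sym₃ is invertible with inverse ⟦C⟧ − ⟦C⟧∘K₊(n)∘⟦C⟧; (ii) the quadratic form q ↦ q:((⟦C⟧⁻¹ + K₋(n)):q) is negative definite on Sym₃, since ⟦C⟧∘K₊(n)∘⟦C⟧ is positive semidefinite and hence ⟦C⟧ − ⟦C⟧∘K₊(n)∘⟦C⟧ ≤ ⟦C⟧ < 0. -/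

import Mathlib

open Matrix

noncomputable section

/-- 3×3 real matrices; symmetric ones model Sym₃. -/
abbrev Mat := Matrix (Fin 3) (Fin 3) ℝ

/-- Inner product on matrices: a:b = tr(ab). -/
def inn (a b : Mat) : ℝ := (a * b).trace

/-- Isotropic elasticity tensor with Lamé parameters l, m: ε ↦ l(tr ε)E + 2mε. -/
def isoC (l m : ℝ) (e : Mat) : Mat := (l * e.trace) • (1 : Mat) + (2*m) • e

/-- The interface operator K(n) for material parameters (μ, ν):
K(n):q = (1/(2μ))(qₙ⊗n + n⊗qₙ − (qₙₙ/(1−ν)) n⊗n). -/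
def Kop (μ ν : ℝ) (n : Fin 3 → ℝ) (q : Mat) : Mat :=
  (1/(2*μ)) • (vecMulVec (q.mulVec n) n + vecMulVec n (q.mulVec n)
    - ((n ⬝ᵥ q.mulVec n)/(1-ν)) • vecMulVec n n)

/- ------------------- auxiliary lemmas ------------------- -/

lemma vv_mulVec (a b c : Fin 3 → ℝ) : (vecMulVec a b).mulVec c = (b ⬝ᵥ c) • a := by
  ext i
  simp only [Matrix.mulVec, vecMulVec_apply, dotProduct, Pi.smul_apply, smul_eq_mul,
    Finset.mul_sum, Finset.sum_mul]
  exact Finset.sum_congr rfl fun _ _ => by ring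

lemma trace_vv (a b : Fin 3 → ℝ) : (vecMulVec a b).trace = a ⬝ᵥ b := by
  simp [Matrix.trace, Matrix.diag, vecMulVec_apply, dotProduct]

lemma trace_vv_mul (a b : Fin 3 → ℝ) (p : Mat) :
    (vecMulVec a b * p).trace = b ⬝ᵥ p.mulVec a := by
  simp only [Matrix.trace, Matrix.diag, Matrix.mul_apply, vecMulVec_apply, dotProduct,
    Matrix.mulVec, Fin.sum_univ_three]
  ring

lemma vv_add_left (a b c : Fin 3 → ℝ) :
    vecMulVec (a + b) c = vecMulVec a c + vecMulVec b c := by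
  ext i j; simp [vecMulVec_apply]; ring

lemma vv_smul_left (r : ℝ) (a c : Fin 3 → ℝ) :
    vecMulVec (r • a) c = r • vecMulVec a c := by
  ext i j; simp [vecMulVec_apply]; ring

lemma vv_add_right (a b c : Fin 3 → ℝ) :
    vecMulVec c (a + b) = vecMulVec c a + vecMulVec c b := by
  ext i j; simp [vecMulVec_apply]; ring

lemma vv_smul_right (r : ℝ) (a c : Fin 3 → ℝ) :
    vecMulVec c (r • a) = r • vecMulVec c a := by
  ext i j; simp [vecMulVec_apply]; ring

lemma vv_sub_left (a b c : Fin 3 → ℝ) :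
    vecMulVec (a - b) c = vecMulVec a c - vecMulVec b c := by
  ext i j; simp [vecMulVec_apply]; ring

lemma vv_sub_right (a b c : Fin 3 → ℝ) :
    vecMulVec c (a - b) = vecMulVec c a - vecMulVec c b := by
  ext i j; simp [vecMulVec_apply]; ring

lemma Kop_isSymm (μ ν : ℝ) (n : Fin 3 → ℝ) (p : Mat) : (Kop μ ν n p).IsSymm := by
  show _ᵀ = _
  ext i j
  simp only [Kop, Matrix.transpose_apply, Matrix.smul_apply, Matrix.add_apply,
    Matrix.sub_apply, vecMulVec_apply, smul_eq_mul]
  ring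

lemma Kop_add (μ ν : ℝ) (n : Fin 3 → ℝ) (a b : Mat) :
    Kop μ ν n (a + b) = Kop μ ν n a + Kop μ ν n b := by
  ext i j
  simp [Kop, Matrix.add_mulVec, vecMulVec_apply, dotProduct, Fin.sum_univ_three,
    Matrix.mulVec, Pi.add_apply]
  ring

lemma Kop_sub (μ ν : ℝ) (n : Fin 3 → ℝ) (a b : Mat) :
    Kop μ ν n (a - b) = Kop μ ν n a - Kop μ ν n b := by
  ext i j
  simp [Kop, Matrix.sub_mulVec, vecMulVec_apply, dotProduct, Fin.sum_univ_three,
    Matrix.mulVec, Pi.sub_apply]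
  ring

set_option maxHeartbeats 2000000 in
/-- The key algebraic identity: K_a − K_b = K_a ∘ (C_b − C_a) ∘ K_b. -/
lemma key_identity (la μa lb μb : ℝ)
    (ha : μa ≠ 0) (hb : μb ≠ 0)
    (ha1 : la + μa ≠ 0) (ha2 : la + 2*μa ≠ 0)
    (hb1 : lb + μb ≠ 0) (hb2 : lb + 2*μb ≠ 0)
    (n : Fin 3 → ℝ) (hn : n ⬝ᵥ n = 1) (p : Mat) :
    Kop μa (la/(2*(la+μa))) n p - Kop μb (lb/(2*(lb+μb))) n p
      = Kop μa (la/(2*(la+μa))) n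
          (((lb - la) * (Kop μb (lb/(2*(lb+μb))) n p).trace) • (1 : Mat)
            + (2*(μb - μa)) • Kop μb (lb/(2*(lb+μb))) n p) := by
  have hA : (1 : ℝ) - la/(2*(la+μa)) = (la+2*μa)/(2*(la+μa)) := by
    field_simp; ring
  have hB : (1 : ℝ) - lb/(2*(lb+μb)) = (lb+2*μb)/(2*(lb+μb)) := by
    field_simp; ring
  set v : Fin 3 → ℝ := p.mulVec n with hv
  have hcomm : v ⬝ᵥ n = n ⬝ᵥ v := dotProduct_comm _ _
  simp only [Kop, hA, hB, Matrix.trace_smul, Matrix.trace_add, Matrix.trace_sub,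
    Matrix.trace_one, trace_vv, Matrix.add_mulVec, Matrix.sub_mulVec,
    Matrix.smul_mulVec, Matrix.one_mulVec, vv_mulVec, hn, one_smul,
    smul_add, smul_sub, smul_smul, dotProduct_add, dotProduct_sub, dotProduct_smul,
    smul_eq_mul, hcomm, vv_add_left, vv_smul_left, vv_add_right, vv_smul_right, vv_sub_left, vv_sub_right]
  rw [dotProduct_comm (p *ᵥ n) n]
  match_scalars <;> field_simp <;> ring

lemma Kop_zero (μ ν : ℝ) (n : Fin 3 → ℝ) : Kop μ ν n (0 : Mat) = 0 := by
  ext i j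
  simp [Kop, vecMulVec_apply]

lemma Kop_neg (μ ν : ℝ) (n : Fin 3 → ℝ) (a : Mat) : Kop μ ν n (-a) = -Kop μ ν n a := by
  have := Kop_sub μ ν n 0 a
  simpa [Kop_zero] using this

lemma inn_comm (a b : Mat) : inn a b = inn b a := Matrix.trace_mul_comm a b

lemma inn_sub_right (a b c : Mat) : inn a (b - c) = inn a b - inn a c := by
  simp [inn, mul_sub]

/-- positive semidefiniteness of Kop on symmetric matrices. -/
lemma Kop_psd (l μ : ℝ) (hμ : 0 < μ) (hk : 0 < 3*l + 2*μ) (n : Fin 3 → ℝ)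
    (hn : n ⬝ᵥ n = 1) (p : Mat) (hp : p.IsSymm) :
    0 ≤ inn (Kop μ (l/(2*(l+μ))) n p) p := by
  have hlμ : 0 < l + μ := by linarith
  have hl2 : 0 < l + 2*μ := by linarith
  set v : Fin 3 → ℝ := p.mulVec n with hv
  have hvsym : n ⬝ᵥ p.mulVec v = v ⬝ᵥ v := by
    rw [dotProduct_mulVec]
    congr 1
    rw [← hp.eq, vecMul_transpose]
  have hinn : inn (Kop μ (l/(2*(l+μ))) n p) p
      = (1/(2*μ)) * (v ⬝ᵥ v + v ⬝ᵥ v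
          - (n ⬝ᵥ v)/(1 - l/(2*(l+μ))) * (n ⬝ᵥ v)) := by
    simp only [inn, Kop, Matrix.smul_mul, Matrix.add_mul, Matrix.sub_mul,
      Matrix.trace_smul, Matrix.trace_add, Matrix.trace_sub, trace_vv_mul,
      smul_eq_mul, ← hv, hvsym]
  rw [hinn]
  have hcs : (n ⬝ᵥ v)^2 ≤ v ⬝ᵥ v := by
    have h1 := hn
    simp only [dotProduct, Fin.sum_univ_three] at h1 ⊢
    nlinarith [sq_nonneg (n 0 * v 1 - n 1 * v 0), sq_nonneg (n 0 * v 2 - n 2 * v 0),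
      sq_nonneg (n 1 * v 2 - n 2 * v 1), h1]
  have hA : 0 ≤ v ⬝ᵥ v := by
    simp only [dotProduct, Fin.sum_univ_three]
    nlinarith [mul_self_nonneg (v 0), mul_self_nonneg (v 1), mul_self_nonneg (v 2)]
  have hval : (1 : ℝ) - l/(2*(l+μ)) = (l+2*μ)/(2*(l+μ)) := by field_simp; ring
  rw [hval]
  have hred : (n ⬝ᵥ v) / ((l+2*μ)/(2*(l+μ))) * (n ⬝ᵥ v)
      = (n ⬝ᵥ v)^2 * (2*(l+μ)) / (l+2*μ) := by
    field_simp
  rw [hred]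
  have hle : (n ⬝ᵥ v)^2 * (2*(l+μ)) / (l+2*μ) ≤ v ⬝ᵥ v + v ⬝ᵥ v := by
    rw [div_le_iff₀ hl2]
    nlinarith [hcs, hA, sq_nonneg (n ⬝ᵥ v)]
  have h2μ : (0:ℝ) ≤ 1/(2*μ) := by positivity
  nlinarith [hle, h2μ]

theorem negdef_jump_inverse
    (lm μm lp μp : ℝ)
    (hμm : 0 < μm) (hkm : 0 < 3*lm + 2*μm) (hμp : 0 < μp) (hkp : 0 < 3*lp + 2*μp)
    (νm νp : ℝ) (hνm : νm = lm/(2*(lm + μm))) (hνp : νp = lp/(2*(lp + μp)))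
    (jump : Mat → Mat) (hjump : ∀ q : Mat, jump q = isoC lp μp q - isoC lm μm q)
    (hneg : ∀ q : Mat, q.IsSymm → q ≠ 0 → inn (jump q) q < 0)
    (D : Mat →ₗ[ℝ] Mat)
    (hDs : ∀ q : Mat, q.IsSymm → (D q).IsSymm)
    (hD₁ : ∀ q : Mat, q.IsSymm → D (jump q) = q)
    (hD₂ : ∀ q : Mat, q.IsSymm → jump (D q) = q)
    (n : Fin 3 → ℝ) (hn : n ⬝ᵥ n = 1) :
    (μp < μm ∧ 3*lp + 2*μp < 3*lm + 2*μm)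
    ∧ (∀ q : Mat, q.IsSymm →
        (D (jump q - jump (Kop μp νp n (jump q)))
            + Kop μm νm n (jump q - jump (Kop μp νp n (jump q))) = q)
        ∧ (jump (D q + Kop μm νm n q)
            - jump (Kop μp νp n (jump (D q + Kop μm νm n q))) = q))
    ∧ (∀ q : Mat, q.IsSymm → 0 ≤ inn (jump (Kop μp νp n (jump q))) q)
    ∧ (∀ q : Mat, q.IsSymm → q ≠ 0 → inn (D q + Kop μm νm n q) q < 0) := by
  subst hνm hνp
  have hlmμ : 0 < lm + μm := by linarith
  have hlm2 : 0 < lm + 2*μm := by linarith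
  have hlpμ : 0 < lp + μp := by linarith
  have hlp2 : 0 < lp + 2*μp := by linarith
  have jump_eq : ∀ X : Mat,
      jump X = ((lp - lm) * X.trace) • (1 : Mat) + (2*(μp - μm)) • X := by
    intro X
    rw [hjump]
    unfold isoC
    match_scalars <;> ring
  have jump_add : ∀ X Y : Mat, jump (X + Y) = jump X + jump Y := by
    intro X Y
    simp only [jump_eq, Matrix.trace_add]
    match_scalars <;> ring
  have jump_sub : ∀ X Y : Mat, jump (X - Y) = jump X - jump Y := by
    intro X Y
    simp only [jump_eq, Matrix.trace_sub]
    match_scalars <;> ring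
  have jump_zero : jump 0 = 0 := by
    rw [jump_eq]; simp
  have jump_symm : ∀ X : Mat, X.IsSymm → (jump X).IsSymm := by
    intro X hX
    show _ᵀ = _
    rw [jump_eq]
    simp [Matrix.transpose_add, Matrix.transpose_smul, Matrix.transpose_one, hX.eq]
  have keyA : ∀ X : Mat,
      Kop μm (lm/(2*(lm+μm))) n X - Kop μp (lp/(2*(lp+μp))) n X
        = Kop μm (lm/(2*(lm+μm))) n (jump (Kop μp (lp/(2*(lp+μp))) n X)) := by
    intro X
    rw [jump_eq]
    exact key_identity lm μm lp μp (ne_of_gt hμm) (ne_of_gt hμp) (ne_of_gt hlmμ)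
      (ne_of_gt hlm2) (ne_of_gt hlpμ) (ne_of_gt hlp2) n hn X
  have keyB : ∀ X : Mat,
      Kop μm (lm/(2*(lm+μm))) n X - Kop μp (lp/(2*(lp+μp))) n X
        = Kop μp (lp/(2*(lp+μp))) n (jump (Kop μm (lm/(2*(lm+μm))) n X)) := by
    intro X
    have h := key_identity lp μp lm μm (ne_of_gt hμp) (ne_of_gt hμm) (ne_of_gt hlpμ)
      (ne_of_gt hlp2) (ne_of_gt hlmμ) (ne_of_gt hlm2) n hn X
    have harg : ((lm - lp) * (Kop μm (lm/(2*(lm+μm))) n X).trace) • (1 : Mat)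
        + (2*(μm - μp)) • Kop μm (lm/(2*(lm+μm))) n X
        = -(jump (Kop μm (lm/(2*(lm+μm))) n X)) := by
      rw [jump_eq]
      match_scalars <;> ring
    rw [harg, Kop_neg] at h
    linear_combination (norm := abel) -h
  have hadj : ∀ a b : Mat, inn (jump a) b = inn a (jump b) := by
    intro a b
    simp only [inn, jump_eq, Matrix.add_mul, Matrix.mul_add, Matrix.smul_mul,
      Matrix.mul_smul, Matrix.one_mul, Matrix.mul_one, Matrix.trace_add,
      Matrix.trace_smul, smul_eq_mul]
    ring
  have part1 : μp < μm ∧ 3*lp + 2*μp < 3*lm + 2*μm := by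
    constructor
    · have hs : (!![(0:ℝ),1,0;1,0,0;0,0,0]).IsSymm := by
        show _ᵀ = _
        ext i j
        fin_cases i <;> fin_cases j <;> rfl
      have hne : (!![(0:ℝ),1,0;1,0,0;0,0,0]) ≠ 0 := by
        intro h
        have := congrFun (congrFun h 0) 1
        simp at this
      have h := hneg _ hs hne
      rw [jump_eq] at h
      simp [inn, Matrix.trace_fin_three, Matrix.mul_apply, Fin.sum_univ_three,
        Matrix.one_apply, Matrix.add_apply, Matrix.smul_apply] at h
      linarith
    · have h := hneg 1 Matrix.isSymm_one one_ne_zero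
      rw [jump_eq] at h
      simp [inn, Matrix.trace_fin_three, Matrix.mul_apply, Fin.sum_univ_three,
        Matrix.one_apply, Matrix.add_apply, Matrix.smul_apply] at h
      linarith
  have part2 : ∀ q : Mat, q.IsSymm →
      (D (jump q - jump (Kop μp (lp/(2*(lp+μp))) n (jump q)))
          + Kop μm (lm/(2*(lm+μm))) n
              (jump q - jump (Kop μp (lp/(2*(lp+μp))) n (jump q))) = q)
      ∧ (jump (D q + Kop μm (lm/(2*(lm+μm))) n q)
          - jump (Kop μp (lp/(2*(lp+μp))) n
              (jump (D q + Kop μm (lm/(2*(lm+μm))) n q))) = q) := by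
    intro q hq
    constructor
    · have hjs : (jump q).IsSymm := jump_symm q hq
      have hks : (Kop μp (lp/(2*(lp+μp))) n (jump q)).IsSymm := Kop_isSymm _ _ _ _
      rw [map_sub, hD₁ q hq, hD₁ _ hks, Kop_sub, ← keyA]
      abel
    · rw [jump_add, hD₂ q hq, Kop_add]
      have h := keyB q
      have : Kop μp (lp/(2*(lp+μp))) n q
          + Kop μp (lp/(2*(lp+μp))) n (jump (Kop μm (lm/(2*(lm+μm))) n q))
          = Kop μm (lm/(2*(lm+μm))) n q := by
        rw [← h]; abel
      rw [this]
      abel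
  have part3 : ∀ q : Mat, q.IsSymm →
      0 ≤ inn (jump (Kop μp (lp/(2*(lp+μp))) n (jump q))) q := by
    intro q hq
    rw [hadj]
    exact Kop_psd lp μp hμp hkp n hn (jump q) (jump_symm q hq)
  refine ⟨part1, part2, part3, ?_⟩
  intro q hq hq0
  set r : Mat := D q + Kop μm (lm/(2*(lm+μm))) n q with hr
  have hrs : r.IsSymm := by
    show _ᵀ = _
    rw [hr, Matrix.transpose_add, (hDs q hq).eq, (Kop_isSymm _ _ _ _).eq]
  have hrq : jump r - jump (Kop μp (lp/(2*(lp+μp))) n (jump r)) = q := (part2 q hq).2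
  have hr0 : r ≠ 0 := by
    intro h
    apply hq0
    rw [← hrq, h, jump_zero, Kop_zero, jump_zero, sub_zero]
  have e1 : inn r q = inn r (jump r)
      - inn r (jump (Kop μp (lp/(2*(lp+μp))) n (jump r))) := by
    rw [← hrq, inn_sub_right]
  have e2 : inn r (jump r) < 0 := by
    rw [inn_comm]
    exact hneg r hrs hr0
  have e3 : 0 ≤ inn r (jump (Kop μp (lp/(2*(lp+μp))) n (jump r))) := by
    rw [← inn_comm]
    exact part3 r hrs
  linarith
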